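/- Let A be a static constant game, π either player, and Γ and Δ legal runs of ⫰ᵀA such that Δ is a π-delay of Γ. If Γ is a π-won run of ⫰ᵀA, then Δ is a π-won run of ⫰ᵀA. -/

import Mathlib

/- ============================================================
   Computability Logic: runs, constant games, delays, static
   games, and the tight/loose toggling-branching recurrences.
   ============================================================ -/

/-- The two players: `top` (⊤, the machine) and `bot` (⊥, the environment). -/
inductive Player : Type
  | top : Player
  | bot : Player
deriving DecidableEq

/-- The adversary (opposite) of a player. -/
def Player.opp : Player → Player
  | .top => .bot
  | .bot => .top

/-- Symbols of the fixed move alphabet: the bits `0` and `1`, the period `.`,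
the colon `:`, and (countably many) other characters. -/
inductive CSym : Type
  | b0 : CSym
  | b1 : CSym
  | dot : CSym
  | colon : CSym
  | ch : ℕ → CSym
deriving DecidableEq

/-- A move is a finite string over the fixed alphabet. -/
abbrev Move := List CSym

/-- A labmove is a move together with the label of the player who made it. -/
abbrev Labmove := Player × Move

/-- A run is a finite or infinite sequence of labmoves. -/
abbrev Run := Stream'.Seq Labmove

/-- A position is a finite run. -/
abbrev Position := List Labmove

/-- The symbol encoding a bit. -/
def bitSym (b : Bool) : CSym := if b then .b1 else .b0

/-- The move that is the bare bitstring `w`. -/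
def bitsMove (w : List Bool) : Move := w.map bitSym

/-- The (replicative-style) move `w:`. -/
def repMove (w : List Bool) : Move := bitsMove w ++ [.colon]

/-- The (non-replicative-style) move `w.α`. -/
def dotMove (w : List Bool) (α : Move) : Move := bitsMove w ++ (.dot :: α)

/-- Decode a move that is a bare bitstring. -/
def asBits : Move → Option (List Bool)
  | [] => some []
  | .b0 :: r => (asBits r).map (false :: ·)
  | .b1 :: r => (asBits r).map (true :: ·)
  | _ => none

/-- Decode a move of the form `w:` (`w` a bitstring). -/
def asRep : Move → Option (List Bool)
  | [.colon] => some []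
  | .b0 :: r => (asRep r).map (false :: ·)
  | .b1 :: r => (asRep r).map (true :: ·)
  | _ => none

/-- Decode a move of the form `w.α` (`w` a bitstring, `α` a move), splitting at
the (unique such) period. -/
def splitDot : Move → Option (List Bool × Move)
  | .dot :: r => some ([], r)
  | .b0 :: r => (splitDot r).map (fun p => (false :: p.1, p.2))
  | .b1 :: r => (splitDot r).map (fun p => (true :: p.1, p.2))
  | _ => none

/-- Infinite bitstrings. -/
abbrev IStr := ℕ → Bool

/-- The length-`n` initial segment of an infinite bitstring. -/
def prefOf (n : ℕ) (v : IStr) : List Bool := (List.range n).map v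

/-- `u` is a finite initial segment of the infinite bitstring `v`. -/
def IsPref (u : List Bool) (v : IStr) : Prop := u = prefOf u.length v

instance (u : List Bool) (v : IStr) : Decidable (IsPref u v) := by
  unfold IsPref; infer_instance

/-- The finite bitstring `w` with infinitely many `0`s appended. -/
def ezero (w : List Bool) : IStr := fun i => w.getD i false

/-- The finite bitstring `w` followed by the infinite bitstring `v`. -/
def capp (w : List Bool) (v : IStr) : IStr :=
  fun i => if i < w.length then w.getD i false else v (i - w.length)

/-- The indices of `s` whose entry is kept by the filtering function `p`. -/
def fmPred {α β : Type*} (p : α → Option β) (s : Stream'.Seq α) (i : ℕ) : Prop :=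
  ∃ a, s.get? i = some a ∧ (p a).isSome

/-- `p` has at least `n+1` witnesses. -/
def HasNth (p : ℕ → Prop) (n : ℕ) : Prop :=
  ∀ hf : (setOf p).Finite, n < hf.toFinset.card

open Classical in
/-- The subsequence of a (finite or infinite) sequence obtained by
filtering/translating its entries through `p`. -/
noncomputable def seqFilterMap {α β : Type*} (p : α → Option β) (s : Stream'.Seq α) :
    Stream'.Seq β := by
  refine ⟨fun k => if HasNth (fmPred p s) k
    then ((s.get? (Nat.nth (fmPred p s) k)).bind p) else none, ?_⟩
  intro n hn
  have hval : ∀ k, HasNth (fmPred p s) k →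
      (if HasNth (fmPred p s) k then ((s.get? (Nat.nth (fmPred p s) k)).bind p) else none)
        ≠ none := by
    intro k hk
    obtain ⟨a, ha, hpa⟩ := Nat.nth_mem (p := fmPred p s) k hk
    rw [if_pos hk, ha]
    simpa [Option.isSome_iff_ne_none] using hpa
  by_cases h : HasNth (fmPred p s) (n + 1)
  · exact absurd hn (hval n (fun hf => lt_of_le_of_lt (Nat.le_succ n) (h hf)))
  · exact if_neg h

/-- The filtered subsequence of a position (finite-run analogue of `seqFilterMap`). -/
def listFilterMap {β : Type*} (p : Labmove → Option β) (Φ : Position) : List β :=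
  Φ.filterMap p

/-- The filtering function for `Ω^{≼v}`: keep labmoves `π u.α` with `u` an initial
segment of `v`, turning them into `π α`. -/
def subFn (v : IStr) (lm : Labmove) : Option Labmove :=
  match splitDot lm.2 with
  | some (u, α) => if IsPref u v then some (lm.1, α) else none
  | none => none

/-- `Ω^{≼v}` for a run `Ω`. -/
noncomputable def subAt (v : IStr) (Γ : Run) : Run := seqFilterMap (subFn v) Γ

/-- `Φ^{≼v}` for a position `Φ`. -/
def subAtL (v : IStr) (Φ : Position) : Position := Φ.filterMap (subFn v)

/-- The result of changing every label in a run to its opposite. -/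
def negRun (Γ : Run) : Run := Γ.map (fun lm => (lm.1.opp, lm.2))

/-- The subsequence of `π`-labeled moves of a run. -/
noncomputable def subseqOf (π : Player) (Γ : Run) : Run :=
  seqFilterMap (fun lm => if lm.1 = π then some lm else none) Γ

/-- The subsequence of `π`-labeled moves of a position. -/
def subL (π : Player) (Φ : Position) : Position :=
  Φ.filter (fun lm => decide (lm.1 = π))

/-- The indices of the `π`-labeled moves of a run. -/
def labPred (π : Player) (Γ : Run) (i : ℕ) : Prop := ∃ m, Γ.get? i = some (π, m)

/-- `Δ` is a `π`-delay of `Γ`: (1) for both players `π'`, the subsequence of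
`π'`-labeled moves of `Δ` is identical to that of `Γ`; (2) whenever the `n`-th
`π`-labeled move is made later than the `k`-th `¬π`-labeled move in `Γ`, so is
it in `Δ`. -/
def Delay (π : Player) (Δ Γ : Run) : Prop :=
  (∀ π' : Player, subseqOf π' Δ = subseqOf π' Γ) ∧
  (∀ n k : ℕ, HasNth (labPred π Γ) n → HasNth (labPred π.opp Γ) k →
    Nat.nth (labPred π Γ) n > Nat.nth (labPred π.opp Γ) k →
    Nat.nth (labPred π Δ) n > Nat.nth (labPred π.opp Δ) k)

/-- A constant game: a set of legal runs and an assignment of winners. -/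
structure Game where
  legal : Run → Prop
  wins : Run → Player

/-- Well-formedness of a constant game: the empty position is legal, and a run
is legal iff all of its finite initial segments are. -/
def Game.IsGame (A : Game) : Prop :=
  A.legal (Stream'.Seq.ofList []) ∧
  ∀ Γ : Run, A.legal Γ ↔ ∀ n : ℕ, A.legal (Stream'.Seq.ofList (Stream'.Seq.take n Γ))

/-- The run `Γ` is `π`-illegal in `A`: its shortest illegal initial segment has
the form `⟨Φ, πα⟩`. -/
def Game.IllegalBy (A : Game) (π : Player) (Γ : Run) : Prop :=
  ∃ n : ℕ,
    (∀ m ≤ n, A.legal (Stream'.Seq.ofList (Stream'.Seq.take m Γ))) ∧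
    ¬ A.legal (Stream'.Seq.ofList (Stream'.Seq.take (n + 1) Γ)) ∧
    ∃ m : Move, Γ.get? n = some (π, m)

/-- `Γ` is a `π`-won run of `A`: either `Γ` is legal and `Wn` names `π`, or `Γ`
is `¬π`-illegal (an illegal run is won by the adversary of the first offender). -/
def Game.won (A : Game) (π : Player) (Γ : Run) : Prop :=
  (A.legal Γ ∧ A.wins Γ = π) ∨ A.IllegalBy π.opp Γ

/-- A constant game is static iff `π`-won runs are preserved by `π`-delays. -/
def Game.Static (A : Game) : Prop :=
  ∀ (π : Player) (Γ Δ : Run), Delay π Δ Γ → A.won π Γ → A.won π Δ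

/-- The negation `¬A` of a constant game: the roles of the players are interchanged. -/
def Game.neg (A : Game) : Game where
  legal Γ := A.legal (negRun Γ)
  wins Γ := (A.wins (negRun Γ)).opp

/-- `w` is an actual node of the position `Φ`: `w` is empty, or `w = u0` or
`w = u1` for some bitstring `u` such that `Φ` contains the move `u:`. -/
def ActualNode (Φ : Position) (w : List Bool) : Prop :=
  w = [] ∨ ∃ (u : List Bool) (b : Bool), w = u ++ [b] ∧ ∃ π : Player, (π, repMove u) ∈ Φ

/-- `w` is an outer actual node of `Φ`: an actual node that is not a proper
prefix of any other actual node of `Φ`. -/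
def OuterNode (Φ : Position) (w : List Bool) : Prop :=
  ActualNode Φ w ∧ ∀ w' : List Bool, ActualNode Φ w' → w <+: w' → w = w'

/-- `m` is a legal move by `π` in the legal position `Φ` of `⫰ᵀA`: a switch
move, a replicative move, or a non-replicative move. -/
def TightMove (A : Game) (Φ : Position) (π : Player) (m : Move) : Prop :=
  (π = .bot ∧ ∃ w : List Bool, asBits m = some w ∧ ActualNode Φ w) ∨
  (π = .bot ∧ ∃ w : List Bool, asRep m = some w ∧ OuterNode Φ w) ∨
  (∃ (w : List Bool) (α : Move), splitDot m = some (w, α) ∧ ActualNode Φ w ∧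
    ∀ v : IStr, A.legal (Stream'.Seq.ofList (subAtL (capp w v) Φ ++ [(π, α)])))

/-- The legal positions of `⫰ᵀA`. -/
inductive TightLegalPos (A : Game) : Position → Prop
  | nil : TightLegalPos A []
  | snoc {Φ : Position} {π : Player} {m : Move} :
      TightLegalPos A Φ → TightMove A Φ π m → TightLegalPos A (Φ ++ [(π, m)])

/-- The indices of the switch moves (by player `π`) of a run: `π`-labeled moves
whose move part is a bare bitstring. -/
def SwSetP (π : Player) (Γ : Run) : Set ℕ :=
  {i | ∃ (m : Move) (w : List Bool), Γ.get? i = some (π, m) ∧ asBits m = some w}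

open Classical in
/-- The index of the last switch move (by `π`) of a run, when there are finitely
many and at least one (junk value `0` otherwise). -/
noncomputable def lastSwitchIdxP (π : Player) (Γ : Run) : ℕ :=
  if h : (SwSetP π Γ).Finite ∧ (SwSetP π Γ).Nonempty then
    h.1.toFinset.max' (h.1.toFinset_nonempty.mpr h.2)
  else 0

open Classical in
/-- The bitstring of the last switch move (by `π`) of a run; the empty bitstring
if there are no switch moves (or infinitely many). -/
noncomputable def lastSwitchBitsP (π : Player) (Γ : Run) : List Bool :=
  if (SwSetP π Γ).Finite ∧ (SwSetP π Γ).Nonempty then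
    ((Γ.get? (lastSwitchIdxP π Γ)).bind (fun lm => asBits lm.2)).getD []
  else []

/-- The infinite bitstring `t`: the last (`⊥`-made) switch move of `Γ` with
infinitely many `0`s appended, or the infinite string of `0`s if there are no
switch moves. -/
noncomputable def tStream (Γ : Run) : IStr := ezero (lastSwitchBitsP .bot Γ)

open Classical in
/-- The tight toggling-branching recurrence `⫰ᵀA`. -/
noncomputable def tight (A : Game) : Game where
  legal Γ := ∀ n : ℕ, TightLegalPos A (Stream'.Seq.take n Γ)
  wins Γ :=
    if (SwSetP .bot Γ).Finite ∧ A.won .bot (subAt (tStream Γ) Γ) then .bot else .top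

/-- The tight toggling-branching corecurrence `⫯ᵀA = ¬⫰ᵀ¬A`. -/
noncomputable def cotight (A : Game) : Game := Game.neg (tight (Game.neg A))

/-- The shape of legal labmoves of `⫰ᴸA`: `⊥w` (a switch move) for a bitstring
`w`, or `πw.α`. -/
def LooseShape (lm : Labmove) : Prop :=
  (lm.1 = .bot ∧ ∃ w : List Bool, asBits lm.2 = some w) ∨
  (∃ (w : List Bool) (α : Move), splitDot lm.2 = some (w, α))

open Classical in
/-- The loose toggling-branching recurrence `⫰ᴸA`. -/
noncomputable def loose (A : Game) : Game where
  legal Γ := (∀ (i : ℕ) (lm : Labmove), Γ.get? i = some lm → LooseShape lm) ∧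
    ∀ v : IStr, A.legal (subAt v Γ)
  wins Γ :=
    if (SwSetP .bot Γ).Finite ∧ A.won .bot (subAt (tStream Γ) Γ) then .bot else .top

/-- The loose toggling-branching corecurrence `⫯ᴸA = ¬⫰ᴸ¬A`. -/
noncomputable def coloose (A : Game) : Game := Game.neg (loose (Game.neg A))

/-- The sequence of (bitstrings of) switch moves made by `π` in a run, in order. -/
noncomputable def swSeq (π : Player) (Γ : Run) : Stream'.Seq (List Bool) :=
  seqFilterMap (fun lm => if lm.1 = π then asBits lm.2 else none) Γ

/-- The move `i.α` (component prefix for parallel combinations). -/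
def compMove (i : ℕ) (α : Move) : Move := .ch i :: .dot :: α

/-- `Δ^{i.}`: the labmoves of the form `π i.α` of `Δ`, with the prefix `i.` removed. -/
noncomputable def proj (i : ℕ) (Δ : Run) : Run :=
  seqFilterMap (fun lm =>
    match lm.2 with
    | .ch j :: .dot :: α => if j = i then some (lm.1, α) else none
    | _ => none) Δ

open Classical in
/-- The parallel disjunction `A ∨ B`. -/
noncomputable def Game.por (A B : Game) : Game where
  legal Δ :=
    (∀ (k : ℕ) (lm : Labmove), Δ.get? k = some lm →
      ∃ (i : ℕ) (α : Move), (i = 1 ∨ i = 2) ∧ lm.2 = compMove i α) ∧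
    A.legal (proj 1 Δ) ∧ B.legal (proj 2 Δ)
  wins Δ :=
    if A.won .top (proj 1 Δ) ∨ B.won .top (proj 2 Δ) then .top else .bot
/- ==================== Auxiliary development ==================== -/

section Aux
open Classical

theorem hasNth_count {p : ℕ → Prop} {x : ℕ} (hx : p x) : HasNth p (Nat.count p x) :=
  fun hf => Nat.count_lt_card hf hx

theorem sfm_get?_def {α β : Type*} (p : α → Option β) (s : Stream'.Seq α) (j : ℕ) :
    (seqFilterMap p s).get? j =
      if HasNth (fmPred p s) j then ((s.get? (Nat.nth (fmPred p s) j)).bind p) else none := rfl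

theorem sfm_get?_some {α β : Type*} (p : α → Option β) (s : Stream'.Seq α) (j : ℕ) (b : β) :
    (seqFilterMap p s).get? j = some b ↔
      ∃ i a, s.get? i = some a ∧ p a = some b ∧ fmPred p s i ∧ Nat.count (fmPred p s) i = j := by
  rw [sfm_get?_def]
  constructor
  · intro h
    by_cases hj : HasNth (fmPred p s) j
    · rw [if_pos hj] at h
      obtain ⟨a, ha, hb⟩ := Option.bind_eq_some_iff.1 h
      exact ⟨_, a, ha, hb, Nat.nth_mem j hj, Nat.count_nth hj⟩
    · rw [if_neg hj] at h; exact absurd h (by simp)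
  · rintro ⟨i, a, ha, hb, hQ, rfl⟩
    have hj : HasNth (fmPred p s) (Nat.count (fmPred p s) i) := hasNth_count hQ
    rw [if_pos hj, Nat.nth_count hQ, ha]
    exact hb

theorem sfm_get?_isSome {α β : Type*} (p : α → Option β) (s : Stream'.Seq α) (j : ℕ) :
    ((seqFilterMap p s).get? j).isSome ↔ HasNth (fmPred p s) j := by
  rw [sfm_get?_def]
  constructor
  · intro h; by_contra hj; rw [if_neg hj] at h; simp at h
  · intro hj
    obtain ⟨a, ha, hpa⟩ := Nat.nth_mem j hj
    rw [if_pos hj, ha, Option.bind_some]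
    exact hpa

theorem count_corr {Q C P' : ℕ → Prop} (hCQ : ∀ x, C x → Q x)
    (hP' : ∀ x, P' x ↔ ∃ y, C y ∧ Nat.count Q y = x) (i : ℕ) :
    Nat.count P' (Nat.count Q i) = Nat.count C i := by
  induction i with
  | zero => simp
  | succ i ih =>
    by_cases hQ : Q i
    · by_cases hC : C i
      · have hp : P' (Nat.count Q i) := (hP' _).2 ⟨i, hC, rfl⟩
        simp [Nat.count_succ, hQ, hC, hp, ih]
      · have hnp : ¬ P' (Nat.count Q i) := by
          intro h
          obtain ⟨y, hy, hcy⟩ := (hP' _).1 h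
          exact hC (Nat.count_injective (hCQ y hy) hQ hcy ▸ hy)
        simp [Nat.count_succ, hQ, hC, hnp, ih]
    · have hC : ¬ C i := fun h => hQ (hCQ i h)
      simp [Nat.count_succ, hQ, hC, ih]

theorem hasNth_iff_of_corr {Q C P' : ℕ → Prop} (hCQ : ∀ x, C x → Q x)
    (hP' : ∀ x, P' x ↔ ∃ y, C y ∧ Nat.count Q y = x) (n : ℕ) :
    HasNth P' n ↔ HasNth C n := by
  constructor
  · intro h
    obtain ⟨y, hy, hcy⟩ := (hP' _).1 (Nat.nth_mem n h)
    have hn : Nat.count C y = n := by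
      rw [← count_corr hCQ hP' y, hcy, Nat.count_nth h]
    exact hn ▸ hasNth_count hy
  · intro h
    have hy : C (Nat.nth C n) := Nat.nth_mem n h
    have hx : P' (Nat.count Q (Nat.nth C n)) := (hP' _).2 ⟨_, hy, rfl⟩
    have hn : Nat.count P' (Nat.count Q (Nat.nth C n)) = n := by
      rw [count_corr hCQ hP', Nat.count_nth h]
    exact hn ▸ hasNth_count hx

theorem nth_eq_of_corr {Q C P' : ℕ → Prop} (hCQ : ∀ x, C x → Q x)
    (hP' : ∀ x, P' x ↔ ∃ y, C y ∧ Nat.count Q y = x) {n : ℕ} (h : HasNth C n) :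
    Nat.nth P' n = Nat.count Q (Nat.nth C n) := by
  have hy : C (Nat.nth C n) := Nat.nth_mem n h
  have hx : P' (Nat.count Q (Nat.nth C n)) := (hP' _).2 ⟨_, hy, rfl⟩
  have hn : Nat.count P' (Nat.count Q (Nat.nth C n)) = n := by
    rw [count_corr hCQ hP', Nat.count_nth h]
  conv_lhs => rw [← hn]
  exact Nat.nth_count hx

theorem seq_ext_some {α : Type*} {s t : Stream'.Seq α}
    (h : ∀ n a, s.get? n = some a ↔ t.get? n = some a) : s = t := by
  apply Stream'.Seq.ext
  intro n
  cases hs : s.get? n with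
  | none =>
    cases ht : t.get? n with
    | none => rfl
    | some a => exact absurd ((h n a).2 ht) (by rw [hs]; simp)
  | some a => exact ((h n a).1 hs).symm

end Aux

section Aux2
open Classical

theorem fmPred_mono_bind {α β γ : Type*} (q : α → Option β) (p : β → Option γ)
    (s : Stream'.Seq α) : ∀ y, fmPred (fun a => (q a).bind p) s y → fmPred q s y := by
  rintro y ⟨a, ha, h⟩
  refine ⟨a, ha, ?_⟩
  cases hq : q a with
  | none => simp [hq] at h
  | some b => simp

theorem fmPred_comp {α β γ : Type*} (q : α → Option β) (p : β → Option γ) (s : Stream'.Seq α)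
    (x : ℕ) :
    fmPred p (seqFilterMap q s) x ↔
      ∃ y, fmPred (fun a => (q a).bind p) s y ∧ Nat.count (fmPred q s) y = x := by
  constructor
  · rintro ⟨b, hb, hpb⟩
    obtain ⟨y, a, ha, hqa, hQ, hcy⟩ := (sfm_get?_some q s x b).1 hb
    exact ⟨y, ⟨a, ha, by simp [hqa, hpb]⟩, hcy⟩
  · rintro ⟨y, ⟨a, ha, hsome⟩, hcy⟩
    obtain ⟨b, hqa, hpb⟩ : ∃ b, q a = some b ∧ (p b).isSome := by
      cases hq : q a with
      | none => simp [hq] at hsome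
      | some b => simp [hq] at hsome; exact ⟨b, rfl, hsome⟩
    have hQ : fmPred q s y := ⟨a, ha, by simp [hqa]⟩
    exact ⟨b, (sfm_get?_some q s x b).2 ⟨y, a, ha, hqa, hQ, hcy⟩, hpb⟩

theorem seqFilterMap_comp {α β γ : Type*} (q : α → Option β) (p : β → Option γ)
    (s : Stream'.Seq α) :
    seqFilterMap p (seqFilterMap q s) = seqFilterMap (fun a => (q a).bind p) s := by
  apply seq_ext_some
  intro j c
  rw [sfm_get?_some, sfm_get?_some]
  constructor
  · rintro ⟨x, b, hb, hpb, hP', hcP'⟩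
    obtain ⟨y, a, ha, hqa, hQ, hcy⟩ := (sfm_get?_some q s x b).1 hb
    have hC : fmPred (fun a => (q a).bind p) s y := ⟨a, ha, by simp [hqa, hpb]⟩
    refine ⟨y, a, ha, by simp [hqa, hpb], hC, ?_⟩
    rw [← hcP', ← hcy]
    exact (count_corr (fmPred_mono_bind q p s) (fmPred_comp q p s) y).symm
  · rintro ⟨y, a, ha, hbind, hC, hcy⟩
    obtain ⟨b, hqa, hpb⟩ := Option.bind_eq_some_iff.1 (show (q a).bind p = some c from hbind)
    have hQ : fmPred q s y := ⟨a, ha, by simp [hqa]⟩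
    refine ⟨Nat.count (fmPred q s) y, b, ?_, hpb, ?_, ?_⟩
    · exact (sfm_get?_some q s _ b).2 ⟨y, a, ha, hqa, hQ, rfl⟩
    · exact (fmPred_comp q p s _).2 ⟨y, hC, rfl⟩
    · rw [count_corr (fmPred_mono_bind q p s) (fmPred_comp q p s), hcy]

/-- The label filter. -/
def labF (π : Player) : Labmove → Option Labmove := fun lm => if lm.1 = π then some lm else none

theorem subseqOf_eq (π : Player) (Γ : Run) : subseqOf π Γ = seqFilterMap (labF π) Γ := rfl

theorem fmPred_labF_eq (π : Player) (Γ : Run) : fmPred (labF π) Γ = labPred π Γ := by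
  funext i
  apply propext
  constructor
  · rintro ⟨a, ha, h⟩
    have h1 : a.1 = π := by by_contra hne; simp [labF, hne] at h
    exact ⟨a.2, by rw [ha]; rw [← h1]⟩
  · rintro ⟨m, hm⟩
    exact ⟨(π, m), hm, by simp [labF]⟩

/-- Label-preserving move-filtering functions on labmoves. -/
def pf (f : Move → Option Move) : Labmove → Option Labmove :=
  fun lm => (f lm.2).map (fun α => (lm.1, α))

def fsub (v : IStr) (m : Move) : Option Move :=
  match splitDot m with
  | some (u, α) => if IsPref u v then some α else none
  | none => none

theorem subFn_eq (v : IStr) : subFn v = pf (fsub v) := by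
  funext lm
  unfold subFn pf fsub
  rcases splitDot lm.2 with _ | ⟨u, α⟩
  · rfl
  · by_cases h : IsPref u v <;> simp [h]

theorem pf_labF_comm (f : Move → Option Move) (π : Player) (a : Labmove) :
    (pf f a).bind (labF π) = (labF π a).bind (pf f) := by
  unfold pf labF
  cases hf : f a.2 with
  | none => by_cases h : a.1 = π <;> simp [hf, h]
  | some α => by_cases h : a.1 = π <;> simp [hf, h]

theorem subseqOf_sfm (f : Move → Option Move) (π : Player) (Γ : Run) :
    subseqOf π (seqFilterMap (pf f) Γ) = seqFilterMap (pf f) (subseqOf π Γ) := by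
  rw [subseqOf_eq, subseqOf_eq, seqFilterMap_comp, seqFilterMap_comp]
  congr 1
  funext a
  exact pf_labF_comm f π a

end Aux2

section Aux3
open Classical

/-- Kept `ρ`-labeled positions of a run, under the filter `pf f`. -/
def KP (f : Move → Option Move) (ρ : Player) (X : Run) (y : ℕ) : Prop :=
  ∃ a : Labmove, X.get? y = some a ∧ a.1 = ρ ∧ (pf f a).isSome

theorem KP_sub_fm (f : Move → Option Move) (ρ : Player) (X : Run) :
    ∀ y, KP f ρ X y → fmPred (pf f) X y := by
  rintro y ⟨a, ha, _, h⟩; exact ⟨a, ha, h⟩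

theorem KP_sub_lab (f : Move → Option Move) (ρ : Player) (X : Run) :
    ∀ y, KP f ρ X y → labPred ρ X y := by
  rintro y ⟨a, ha, h1, _⟩
  exact ⟨a.2, by rw [ha, ← h1]⟩

theorem labPred_sfm (f : Move → Option Move) (ρ : Player) (X : Run) (x : ℕ) :
    labPred ρ (seqFilterMap (pf f) X) x ↔
      ∃ y, KP f ρ X y ∧ Nat.count (fmPred (pf f) X) y = x := by
  constructor
  · rintro ⟨m, hm⟩
    obtain ⟨y, a, ha, hpa, hQ, hcy⟩ := (sfm_get?_some _ X x (ρ, m)).1 hm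
    have ha1 : a.1 = ρ := by
      unfold pf at hpa
      cases hf : f a.2 with
      | none => rw [hf] at hpa; simp at hpa
      | some α => rw [hf] at hpa; simp at hpa; exact hpa.1
    exact ⟨y, ⟨a, ha, ha1, by rw [hpa]; rfl⟩, hcy⟩
  · rintro ⟨y, ⟨a, ha, ha1, hs⟩, hcy⟩
    obtain ⟨α, hf⟩ : ∃ α, f a.2 = some α := by
      unfold pf at hs
      cases hf : f a.2 with
      | none => rw [hf] at hs; simp at hs
      | some α => exact ⟨α, rfl⟩
    refine ⟨α, (sfm_get?_some _ X x (ρ, α)).2 ⟨y, a, ha, ?_, ⟨a, ha, hs⟩, hcy⟩⟩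
    unfold pf
    rw [hf, ha1]
    rfl

theorem R_iff (f : Move → Option Move) (ρ : Player) (X : Run) (x : ℕ) :
    fmPred (pf f) (subseqOf ρ X) x ↔
      ∃ y, KP f ρ X y ∧ Nat.count (labPred ρ X) y = x := by
  rw [subseqOf_eq]
  constructor
  · rintro ⟨a, ha, hs⟩
    obtain ⟨y, a', ha', hl, hQ, hcy⟩ := (sfm_get?_some (labF ρ) X x a).1 ha
    have h1 : a'.1 = ρ ∧ a' = a := by
      unfold labF at hl
      by_cases h : a'.1 = ρ
      · rw [if_pos h] at hl; exact ⟨h, Option.some_inj.1 hl⟩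
      · rw [if_neg h] at hl; exact absurd hl (by simp)
    refine ⟨y, ⟨a', ha', h1.1, by rw [h1.2]; exact hs⟩, ?_⟩
    rw [← fmPred_labF_eq]
    exact hcy
  · rintro ⟨y, ⟨a, ha, ha1, hs⟩, hcy⟩
    refine ⟨a, (sfm_get?_some (labF ρ) X x a).2 ⟨y, a, ha, by simp [labF, ha1], ?_, ?_⟩, hs⟩
    · exact ⟨a, ha, by simp [labF, ha1]⟩
    · rw [fmPred_labF_eq]
      exact hcy

theorem delay_sfm (f : Move → Option Move) (π : Player) (Δ Γ : Run) (hd : Delay π Δ Γ) :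
    Delay π (seqFilterMap (pf f) Δ) (seqFilterMap (pf f) Γ) := by
  constructor
  · intro π'
    rw [subseqOf_sfm, subseqOf_sfm, hd.1 π']
  · intro n k hn hk hgt
    have hR : ∀ ρ : Player, fmPred (pf f) (subseqOf ρ Δ) = fmPred (pf f) (subseqOf ρ Γ) := by
      intro ρ; rw [hd.1 ρ]
    -- Γ side
    have hnK : HasNth (KP f π Γ) n :=
      (hasNth_iff_of_corr (KP_sub_fm f π Γ) (labPred_sfm f π Γ) n).1 hn
    have hkK : HasNth (KP f π.opp Γ) k :=
      (hasNth_iff_of_corr (KP_sub_fm f π.opp Γ) (labPred_sfm f π.opp Γ) k).1 hk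
    rw [nth_eq_of_corr (KP_sub_fm f π Γ) (labPred_sfm f π Γ) hnK,
        nth_eq_of_corr (KP_sub_fm f π.opp Γ) (labPred_sfm f π.opp Γ) hkK] at hgt
    have haΓ : Nat.nth (KP f π Γ) n > Nat.nth (KP f π.opp Γ) k := Nat.lt_of_count_lt_count hgt
    -- transfer through the π-subsequences
    have hRn : HasNth (fmPred (pf f) (subseqOf π Γ)) n :=
      (hasNth_iff_of_corr (KP_sub_lab f π Γ) (R_iff f π Γ) n).2 hnK
    have hRk : HasNth (fmPred (pf f) (subseqOf π.opp Γ)) k :=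
      (hasNth_iff_of_corr (KP_sub_lab f π.opp Γ) (R_iff f π.opp Γ) k).2 hkK
    have eR1 : Nat.nth (fmPred (pf f) (subseqOf π Γ)) n
        = Nat.count (labPred π Γ) (Nat.nth (KP f π Γ) n) :=
      nth_eq_of_corr (KP_sub_lab f π Γ) (R_iff f π Γ) hnK
    have eR2 : Nat.nth (fmPred (pf f) (subseqOf π.opp Γ)) k
        = Nat.count (labPred π.opp Γ) (Nat.nth (KP f π.opp Γ) k) :=
      nth_eq_of_corr (KP_sub_lab f π.opp Γ) (R_iff f π.opp Γ) hkK
    have hLn : HasNth (labPred π Γ) (Nat.nth (fmPred (pf f) (subseqOf π Γ)) n) := by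
      rw [eR1]; exact hasNth_count (KP_sub_lab f π Γ _ (Nat.nth_mem n hnK))
    have hLk : HasNth (labPred π.opp Γ) (Nat.nth (fmPred (pf f) (subseqOf π.opp Γ)) k) := by
      rw [eR2]; exact hasNth_count (KP_sub_lab f π.opp Γ _ (Nat.nth_mem k hkK))
    have hord : Nat.nth (labPred π Γ) (Nat.nth (fmPred (pf f) (subseqOf π Γ)) n) >
        Nat.nth (labPred π.opp Γ) (Nat.nth (fmPred (pf f) (subseqOf π.opp Γ)) k) := by
      rw [eR1, eR2, Nat.nth_count (KP_sub_lab f π Γ _ (Nat.nth_mem n hnK)),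
          Nat.nth_count (KP_sub_lab f π.opp Γ _ (Nat.nth_mem k hkK))]
      exact haΓ
    have hΔord := hd.2 _ _ hLn hLk hord
    -- Δ side
    have hnKΔ : HasNth (KP f π Δ) n :=
      (hasNth_iff_of_corr (KP_sub_lab f π Δ) (R_iff f π Δ) n).1 (by rw [hR π]; exact hRn)
    have hkKΔ : HasNth (KP f π.opp Δ) k :=
      (hasNth_iff_of_corr (KP_sub_lab f π.opp Δ) (R_iff f π.opp Δ) k).1 (by rw [hR π.opp]; exact hRk)
    have eΔa : Nat.nth (labPred π Δ) (Nat.nth (fmPred (pf f) (subseqOf π Γ)) n)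
        = Nat.nth (KP f π Δ) n := by
      rw [← hR π, nth_eq_of_corr (KP_sub_lab f π Δ) (R_iff f π Δ) hnKΔ]
      exact Nat.nth_count (KP_sub_lab f π Δ _ (Nat.nth_mem n hnKΔ))
    have eΔb : Nat.nth (labPred π.opp Δ) (Nat.nth (fmPred (pf f) (subseqOf π.opp Γ)) k)
        = Nat.nth (KP f π.opp Δ) k := by
      rw [← hR π.opp, nth_eq_of_corr (KP_sub_lab f π.opp Δ) (R_iff f π.opp Δ) hkKΔ]
      exact Nat.nth_count (KP_sub_lab f π.opp Δ _ (Nat.nth_mem k hkKΔ))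
    have haΔ : Nat.nth (KP f π Δ) n > Nat.nth (KP f π.opp Δ) k := by
      rw [← eΔa, ← eΔb]; exact hΔord
    rw [nth_eq_of_corr (KP_sub_fm f π Δ) (labPred_sfm f π Δ) hnKΔ,
        nth_eq_of_corr (KP_sub_fm f π.opp Δ) (labPred_sfm f π.opp Δ) hkKΔ]
    exact Nat.count_strict_mono (KP_sub_fm f π.opp Δ _ (Nat.nth_mem k hkKΔ)) haΔ

theorem delay_subAt (v : IStr) (π : Player) (Δ Γ : Run) (hd : Delay π Δ Γ) :
    Delay π (subAt v Δ) (subAt v Γ) := by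
  unfold subAt
  rw [subFn_eq]
  exact delay_sfm _ π Δ Γ hd

end Aux3

section Aux4
open Classical

def qsw (π : Player) : Labmove → Option (List Bool) :=
  fun lm => if lm.1 = π then asBits lm.2 else none

theorem swSeq_eq (π : Player) (Γ : Run) : swSeq π Γ = seqFilterMap (qsw π) Γ := rfl

theorem qsw_decomp (π : Player) :
    qsw π = fun a => (labF π a).bind (fun lm => asBits lm.2) := by
  funext a
  unfold qsw labF
  by_cases h : a.1 = π <;> simp [h]

theorem swSeq_subseq (π : Player) (Γ : Run) :
    swSeq π Γ = seqFilterMap (fun lm : Labmove => asBits lm.2) (subseqOf π Γ) := by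
  rw [swSeq_eq, subseqOf_eq, seqFilterMap_comp, qsw_decomp]

theorem SwSetP_eq (π : Player) (Γ : Run) : SwSetP π Γ = setOf (fmPred (qsw π) Γ) := by
  ext i
  constructor
  · rintro ⟨m, w, hm, hw⟩
    exact ⟨(π, m), hm, by simp [qsw, hw]⟩
  · rintro ⟨a, ha, hs⟩
    have h1 : a.1 = π := by by_contra h; simp [qsw, h] at hs
    obtain ⟨w, hw⟩ : ∃ w, asBits a.2 = some w := by
      rw [qsw, if_pos h1] at hs
      exact Option.isSome_iff_exists.1 hs
    exact ⟨a.2, w, by rw [ha, ← h1], hw⟩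

theorem hasNth_fmPred_iff_of_eq {α β : Type*} {p : α → Option β} {s t : Stream'.Seq α}
    (h : seqFilterMap p s = seqFilterMap p t) (n : ℕ) :
    HasNth (fmPred p s) n ↔ HasNth (fmPred p t) n := by
  rw [← sfm_get?_isSome, ← sfm_get?_isSome, h]

theorem finite_iff_not_hasNth {p : ℕ → Prop} :
    (setOf p).Finite ↔ ∃ n, ¬ HasNth p n := by
  constructor
  · intro hf
    exact ⟨hf.toFinset.card, fun h => lt_irrefl _ (h hf)⟩
  · rintro ⟨n, hn⟩
    by_contra h
    exact hn fun hf => absurd hf h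

theorem hasNth_iff_lt_card {p : ℕ → Prop} (hf : (setOf p).Finite) (n : ℕ) :
    HasNth p n ↔ n < hf.toFinset.card := by
  constructor
  · intro h; exact h hf
  · intro h hf'
    have he : hf'.toFinset = hf.toFinset := by
      ext x; simp [Set.Finite.mem_toFinset]
    rw [he]; exact h

theorem card_eq_of_hasNth {p q : ℕ → Prop} (hp : (setOf p).Finite) (hq : (setOf q).Finite)
    (h : ∀ n, HasNth p n ↔ HasNth q n) : hp.toFinset.card = hq.toFinset.card := by
  have key : ∀ n, n < hp.toFinset.card ↔ n < hq.toFinset.card := fun n => by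
    rw [← hasNth_iff_lt_card hp, ← hasNth_iff_lt_card hq]; exact h n
  apply le_antisymm
  · by_contra hc
    push_neg at hc
    exact lt_irrefl _ ((key _).1 hc)
  · by_contra hc
    push_neg at hc
    exact lt_irrefl _ ((key _).2 hc)

theorem hasNth_zero_iff {p : ℕ → Prop} : HasNth p 0 ↔ (setOf p).Nonempty := by
  constructor
  · intro h
    by_cases hf : (setOf p).Finite
    · obtain ⟨x, hx⟩ := Finset.card_pos.1 (h hf)
      exact ⟨x, hf.mem_toFinset.1 hx⟩
    · exact Set.Infinite.nonempty hf
  · rintro ⟨x, hx⟩ hf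
    exact Finset.card_pos.2 ⟨x, hf.mem_toFinset.2 hx⟩

theorem count_max' {p : ℕ → Prop} (hf : (setOf p).Finite) (hne : hf.toFinset.Nonempty) :
    Nat.count p (hf.toFinset.max' hne) = hf.toFinset.card - 1 := by
  rw [Nat.count_eq_card_filter_range]
  have he : (Finset.range (hf.toFinset.max' hne)).filter p
      = hf.toFinset.erase (hf.toFinset.max' hne) := by
    ext x
    simp only [Finset.mem_filter, Finset.mem_range, Finset.mem_erase, Set.Finite.mem_toFinset,
      Set.mem_setOf_eq]
    constructor
    · rintro ⟨hx, hp⟩; exact ⟨Nat.ne_of_lt hx, hp⟩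
    · rintro ⟨hx, hp⟩
      exact ⟨lt_of_le_of_ne (Finset.le_max' _ x (hf.mem_toFinset.2 hp)) hx, hp⟩
  rw [he, Finset.card_erase_of_mem (hf.toFinset.max'_mem hne)]

theorem lastSwitchBits_char (π : Player) (Γ : Run)
    (hf : (SwSetP π Γ).Finite) (hne : (SwSetP π Γ).Nonempty) :
    some (lastSwitchBitsP π Γ) = (swSeq π Γ).get? (hf.toFinset.card - 1) := by
  have hc : (SwSetP π Γ).Finite ∧ (SwSetP π Γ).Nonempty := ⟨hf, hne⟩
  have hi0 : lastSwitchIdxP π Γ = hf.toFinset.max' (hf.toFinset_nonempty.mpr hne) := by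
    rw [lastSwitchIdxP, dif_pos hc]
  set i0 := lastSwitchIdxP π Γ with hidef
  have hmem : i0 ∈ SwSetP π Γ := by
    rw [hi0]
    exact hf.mem_toFinset.1 (hf.toFinset.max'_mem _)
  obtain ⟨m, w, hm, hw⟩ := hmem
  -- LHS
  have hlhs : lastSwitchBitsP π Γ = w := by
    rw [lastSwitchBitsP, if_pos hc, ← hidef, hm]
    simp [hw]
  -- the count of i0
  have hfp : (setOf (fmPred (qsw π) Γ)).Finite := by rw [← SwSetP_eq]; exact hf
  have hcnt : Nat.count (fmPred (qsw π) Γ) i0 = hf.toFinset.card - 1 := by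
    have hne' : hfp.toFinset.Nonempty := by
      rw [Set.Finite.toFinset_nonempty]
      rw [← SwSetP_eq]; exact hne
    have hmax : hfp.toFinset.max' hne' = hf.toFinset.max' (hf.toFinset_nonempty.mpr hne) := by
      congr 1 <;> try rfl
      ext x
      simp only [Set.Finite.mem_toFinset]
      rw [SwSetP_eq]
    have hcard : hfp.toFinset.card = hf.toFinset.card := by
      congr 1
      ext x
      simp only [Set.Finite.mem_toFinset]
      rw [SwSetP_eq]
    rw [hi0, ← hmax, ← hcard]
    exact count_max' hfp hne'
  have hQ : fmPred (qsw π) Γ i0 := by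
    have hx : i0 ∈ setOf (fmPred (qsw π) Γ) := by
      rw [← SwSetP_eq]
      exact ⟨m, w, hm, hw⟩
    exact hx
  rw [hlhs, swSeq_eq]
  exact ((sfm_get?_some (qsw π) Γ _ w).2 ⟨i0, (π, m), hm, by simp [qsw, hw], hQ, hcnt⟩).symm

theorem lastSwitchBits_delay {Δ Γ : Run} (h : subseqOf .bot Δ = subseqOf .bot Γ) :
    lastSwitchBitsP .bot Δ = lastSwitchBitsP .bot Γ ∧
      ((SwSetP .bot Δ).Finite ↔ (SwSetP .bot Γ).Finite) := by
  have hsw : swSeq .bot Δ = swSeq .bot Γ := by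
    rw [swSeq_subseq, swSeq_subseq, h]
  have hp : seqFilterMap (qsw .bot) Δ = seqFilterMap (qsw .bot) Γ := by
    rw [← swSeq_eq, ← swSeq_eq]; exact hsw
  have hHN := hasNth_fmPred_iff_of_eq hp
  have hfin : (SwSetP .bot Δ).Finite ↔ (SwSetP .bot Γ).Finite := by
    rw [SwSetP_eq, SwSetP_eq, finite_iff_not_hasNth, finite_iff_not_hasNth]
    exact exists_congr fun n => not_congr (hHN n)
  have hnemp : (SwSetP .bot Δ).Nonempty ↔ (SwSetP .bot Γ).Nonempty := by
    rw [SwSetP_eq, SwSetP_eq, ← hasNth_zero_iff, ← hasNth_zero_iff]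
    exact hHN 0
  refine ⟨?_, hfin⟩
  by_cases hc : (SwSetP .bot Γ).Finite ∧ (SwSetP .bot Γ).Nonempty
  · have hcΔ : (SwSetP .bot Δ).Finite ∧ (SwSetP .bot Δ).Nonempty :=
      ⟨hfin.2 hc.1, hnemp.2 hc.2⟩
    have hcard : hcΔ.1.toFinset.card = hc.1.toFinset.card := by
      have h1 : (setOf (fmPred (qsw .bot) Δ)).Finite := by rw [← SwSetP_eq]; exact hcΔ.1
      have h2 : (setOf (fmPred (qsw .bot) Γ)).Finite := by rw [← SwSetP_eq]; exact hc.1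
      have e1 : hcΔ.1.toFinset.card = h1.toFinset.card := by
        congr 1; ext x; simp only [Set.Finite.mem_toFinset]; rw [SwSetP_eq]
      have e2 : hc.1.toFinset.card = h2.toFinset.card := by
        congr 1; ext x; simp only [Set.Finite.mem_toFinset]; rw [SwSetP_eq]
      rw [e1, e2]
      exact card_eq_of_hasNth h1 h2 hHN
    apply Option.some_inj.1
    rw [lastSwitchBits_char .bot Δ hcΔ.1 hcΔ.2, lastSwitchBits_char .bot Γ hc.1 hc.2,
      hcard, hsw]
  · have hcΔ : ¬ ((SwSetP .bot Δ).Finite ∧ (SwSetP .bot Δ).Nonempty) := by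
      intro h'
      exact hc ⟨hfin.1 h'.1, hnemp.1 h'.2⟩
    rw [lastSwitchBitsP, if_neg hcΔ, lastSwitchBitsP, if_neg hc]

theorem tStream_delay {Δ Γ : Run} (h : subseqOf .bot Δ = subseqOf .bot Γ) :
    tStream Δ = tStream Γ ∧ ((SwSetP .bot Δ).Finite ↔ (SwSetP .bot Γ).Finite) := by
  obtain ⟨h1, h2⟩ := lastSwitchBits_delay h
  exact ⟨by rw [tStream, tStream, h1], h2⟩

end Aux4

section Aux5
open Classical

theorem seq_take_ofList {α : Type*} : ∀ (n : ℕ) (L : List α),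
    (Stream'.Seq.ofList L).take n = L.take n := by
  intro n
  induction n with
  | zero => intro L; rfl
  | succ n ih =>
    intro L
    cases L with
    | nil =>
      rw [Stream'.Seq.ofList_nil]
      rfl
    | cons a L' =>
      rw [Stream'.Seq.ofList_cons]
      show (match Stream'.Seq.destruct (Stream'.Seq.cons a (Stream'.Seq.ofList L')) with
        | none => []
        | some (x, r) => x :: Stream'.Seq.take n r) = a :: L'.take n
      rw [Stream'.Seq.destruct_cons]
      show a :: (Stream'.Seq.ofList L').take n = a :: L'.take n
      rw [ih L']

theorem list_take_seq_take {α : Type*} : ∀ (m n : ℕ) (s : Stream'.Seq α),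
    (s.take n).take m = s.take (min m n) := by
  intro m
  induction m with
  | zero => intro n s; simp [Stream'.Seq.take]
  | succ m ih =>
    intro n s
    cases n with
    | zero => simp [Stream'.Seq.take]
    | succ n =>
      rw [Nat.succ_min_succ]
      show (match Stream'.Seq.destruct s with
        | none => []
        | some (x, r) => x :: Stream'.Seq.take n r).take (m+1) =
        (match Stream'.Seq.destruct s with
        | none => []
        | some (x, r) => x :: Stream'.Seq.take (min m n) r)
      cases hs : Stream'.Seq.destruct s with
      | none => rfl
      | some xr =>
        obtain ⟨x, r⟩ := xr
        simp [ih n r]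

theorem seq_take_stable {α : Type*} : ∀ (n : ℕ) (s : Stream'.Seq α),
    s.get? n = none → s.take (n+1) = s.take n := by
  intro n
  induction n with
  | zero =>
    intro s h
    show (match Stream'.Seq.destruct s with
      | none => []
      | some (x, r) => x :: Stream'.Seq.take 0 r) = []
    have hd : Stream'.Seq.destruct s = none := by
      unfold Stream'.Seq.destruct
      rw [h]
      rfl
    rw [hd]
  | succ n ih =>
    intro s h
    rcases hs : Stream'.Seq.destruct s with _ | ⟨x, r⟩
    · rw [Stream'.Seq.destruct_eq_none hs]
      rfl
    · have hsc := Stream'.Seq.destruct_eq_cons hs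
      rw [hsc]
      show x :: r.take (n+1) = x :: r.take n
      rw [ih r (by rw [hsc] at h; exact h)]

theorem tight_legal_ofList_take (A : Game) {Γ : Run} (hΓ : (tight A).legal Γ) (n : ℕ) :
    (tight A).legal (Stream'.Seq.ofList (Stream'.Seq.take n Γ)) := by
  intro m
  rw [seq_take_ofList, list_take_seq_take]
  exact hΓ _

theorem tight_not_illegal (A : Game) {Γ : Run} (hΓ : (tight A).legal Γ) (ρ : Player) :
    ¬ (tight A).IllegalBy ρ Γ := by
  rintro ⟨n, -, hbad, -⟩
  exact hbad (tight_legal_ofList_take A hΓ (n + 1))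

theorem won_total {A : Game} (hA : A.IsGame) (Γ : Run) : A.won .top Γ ∨ A.won .bot Γ := by
  by_cases hleg : A.legal Γ
  · cases h : A.wins Γ with
    | top => exact Or.inl (Or.inl ⟨hleg, h⟩)
    | bot => exact Or.inr (Or.inl ⟨hleg, h⟩)
  · have hex : ∃ m, ¬ A.legal (Stream'.Seq.ofList (Γ.take (m + 1))) := by
      by_contra hc
      push_neg at hc
      apply hleg
      rw [(hA.2 Γ)]
      intro n
      cases n with
      | zero => exact hA.1
      | succ m => exact hc m
    have hspec : ¬ A.legal (.ofList (Γ.take (Nat.find hex + 1))) := Nat.find_spec hex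
    have hmin : ∀ m ≤ Nat.find hex, A.legal (.ofList (Γ.take m)) := by
      intro m hm
      cases m with
      | zero => exact hA.1
      | succ j => exact not_not.1 (Nat.find_min hex (Nat.lt_of_succ_le hm))
    have hget : ∃ lm, Γ.get? (Nat.find hex) = some lm := by
      cases h : Γ.get? (Nat.find hex) with
      | some lm => exact ⟨lm, rfl⟩
      | none =>
        exact absurd (by rw [seq_take_stable _ Γ h]; exact hmin _ le_rfl) hspec
    obtain ⟨⟨ρ, m⟩, hlm⟩ := hget
    cases ρ with
    | top => exact Or.inr (Or.inr ⟨Nat.find hex, hmin, hspec, m, hlm⟩)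
    | bot => exact Or.inl (Or.inr ⟨Nat.find hex, hmin, hspec, m, hlm⟩)

theorem won_unique {A : Game} (hA : A.IsGame) {Γ : Run}
    (h1 : A.won .top Γ) (h2 : A.won .bot Γ) : False := by
  have legal_all : A.legal Γ → ∀ n, A.legal (.ofList (Γ.take n)) := fun h n => (hA.2 Γ).1 h n
  rcases h1 with ⟨hl1, hw1⟩ | ⟨n, hmin, hbad, m, hm⟩
  · rcases h2 with ⟨hl2, hw2⟩ | ⟨n, hmin, hbad, m, hm⟩
    · rw [hw1] at hw2
      exact Player.noConfusion hw2
    · exact hbad (legal_all hl1 (n + 1))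
  · rcases h2 with ⟨hl2, hw2⟩ | ⟨n', hmin', hbad', m', hm'⟩
    · exact hbad (legal_all hl2 (n + 1))
    · rcases Nat.lt_trichotomy n n' with h | h | h
      · exact hbad (hmin' (n + 1) h)
      · subst h
        rw [hm] at hm'
        exact Player.noConfusion (Prod.mk.injEq .. ▸ (Option.some_inj.1 hm')).1
      · exact hbad' (hmin (n' + 1) h)

end Aux5

/-- Let `A` be a static constant game and let `Γ`, `Δ` be legal
runs of `⫰ᵀA` with `Δ` a `π`-delay of `Γ`. If `Γ` is a `π`-won run of `⫰ᵀA`, then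
so is `Δ`. -/
theorem tight_won_of_delay (A : Game) (hA : A.IsGame) (hAs : A.Static)
    (π : Player) (Γ Δ : Run)
    (hΓ : (tight A).legal Γ) (hΔ : (tight A).legal Δ) (hd : Delay π Δ Γ)
    (hw : (tight A).won π Γ) :
    (tight A).won π Δ := by
  classical
  have hwins : (tight A).wins Γ = π := by
    rcases hw with ⟨_, h⟩ | h
    · exact h
    · exact absurd h (tight_not_illegal A hΓ _)
  obtain ⟨ht, hfin⟩ := tStream_delay (hd.1 .bot)
  have hdel : Delay π (subAt (tStream Γ) Δ) (subAt (tStream Γ) Γ) := delay_subAt _ π Δ Γ hd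
  have hwinsEq : ∀ X : Run, (tight A).wins X =
      if (SwSetP .bot X).Finite ∧ A.won .bot (subAt (tStream X) X) then Player.bot
      else Player.top := fun X => rfl
  left
  refine ⟨hΔ, ?_⟩
  rw [hwinsEq] at hwins ⊢
  rw [ht]
  cases π with
  | bot =>
    have hcond : (SwSetP .bot Γ).Finite ∧ A.won .bot (subAt (tStream Γ) Γ) := by
      by_contra hc
      rw [if_neg hc] at hwins
      exact Player.noConfusion hwins
    rw [if_pos ⟨hfin.2 hcond.1, hAs .bot _ _ hdel hcond.2⟩]
  | top =>
    have hcond : ¬ ((SwSetP .bot Γ).Finite ∧ A.won .bot (subAt (tStream Γ) Γ)) := by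
      intro hc
      rw [if_pos hc] at hwins
      exact Player.noConfusion hwins
    have hcondΔ : ¬ ((SwSetP .bot Δ).Finite ∧ A.won .bot (subAt (tStream Γ) Δ)) := by
      rintro ⟨hfinΔ, hwbΔ⟩
      have hwtΓ : A.won .top (subAt (tStream Γ) Γ) :=
        (won_total hA _).resolve_right fun h => hcond ⟨hfin.1 hfinΔ, h⟩
      exact won_unique hA (hAs .top _ _ hdel hwtΓ) hwbΔ
    rw [if_neg hcondΔ]
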